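/- For every cograph (V, E), there exist d < ω and an injective function f : V → (2²)^d such that for all distinct v₀, v₁ ∈ V: v₀ E v₁ holds if and only if {f(v₀), f(v₁)} is an up-1-comb, and ¬(v₀ E v₁) holds if and only if {f(v₀), f(v₁)} is a wide right-1-comb. -/

import Mathlib

/-- The index square `2²`. -/
abbrev Sq : Type := Fin 2 × Fin 2

/-- `{σ, τ}` is an up-1-comb: at the end of the longest common prefix the two
sequences have the same first coordinate and different second coordinates. -/
def UpPair {d : ℕ} (σ τ : Fin d → Sq) : Prop :=
  ∃ t : Fin d, (∀ s, s < t → σ s = τ s) ∧ (σ t).1 = (τ t).1 ∧ (σ t).2 ≠ (τ t).2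

/-- `{σ, τ}` is a wide right-1-comb: at the end of the longest common prefix the
two sequences have different first coordinates. -/
def WidePair {d : ℕ} (σ τ : Fin d → Sq) : Prop :=
  ∃ t : Fin d, (∀ s, s < t → σ s = τ s) ∧ (σ t).1 ≠ (τ t).1

def pad {d m : ℕ} (h : d ≤ m) (x : Fin d → Sq) : Fin m → Sq :=
  fun i => if h2 : (i : ℕ) < d then x ⟨i, h2⟩ else ((0 : Fin 2), (0 : Fin 2))

lemma pad_injective {d m : ℕ} (h : d ≤ m) : Function.Injective (pad h) := by
  intro x y hxy
  funext i
  have := congrFun hxy ⟨i, lt_of_lt_of_le i.2 h⟩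
  simpa [pad, i.isLt] using this

lemma upPair_pad {d m : ℕ} (h : d ≤ m) (x y : Fin d → Sq) :
    UpPair (pad h x) (pad h y) ↔ UpPair x y := by
  constructor
  · rintro ⟨t, hag, h1, h2⟩
    by_cases ht : (t : ℕ) < d
    · refine ⟨⟨t, ht⟩, ?_, ?_, ?_⟩
      · intro s hs
        have := hag ⟨s, lt_of_lt_of_le s.2 h⟩ (show (s : ℕ) < t from hs)
        simpa [pad, s.isLt] using this
      · simpa [pad, ht] using h1
      · simpa [pad, ht] using h2
    · exact (h2 (by simp [pad, ht])).elim
  · rintro ⟨t, hag, h1, h2⟩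
    refine ⟨⟨t, lt_of_lt_of_le t.2 h⟩, ?_, ?_, ?_⟩
    · intro s hs
      have hst : (s : ℕ) < (t : ℕ) := hs
      have hsd : (s : ℕ) < d := lt_trans hst t.2
      simp only [pad, dif_pos hsd]
      exact hag ⟨s, hsd⟩ hst
    · simpa [pad, t.isLt] using h1
    · simpa [pad, t.isLt] using h2

lemma upPair_cons {d : ℕ} (a : Sq) (x y : Fin d → Sq) :
    UpPair (Fin.cons a x) (Fin.cons a y) ↔ UpPair x y := by
  constructor
  · rintro ⟨t, hag, h1, h2⟩
    rcases Fin.eq_zero_or_eq_succ t with rfl | ⟨s, rfl⟩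
    · simp at h2
    · refine ⟨s, ?_, by simpa using h1, by simpa using h2⟩
      intro u hu
      have := hag u.succ (by simpa using hu)
      simpa using this
  · rintro ⟨t, hag, h1, h2⟩
    refine ⟨t.succ, ?_, by simpa using h1, by simpa using h2⟩
    intro s hs
    rcases Fin.eq_zero_or_eq_succ s with rfl | ⟨u, rfl⟩
    · simp
    · have : u < t := by simpa using hs
      simpa using hag u this

lemma not_upPair_cons_of_fst_ne {d : ℕ} {a b : Sq} (hab : a.1 ≠ b.1) (x y : Fin d → Sq) :
    ¬ UpPair (Fin.cons a x) (Fin.cons b y) := by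
  rintro ⟨t, hag, h1, h2⟩
  rcases Fin.eq_zero_or_eq_succ t with rfl | ⟨s, rfl⟩
  · exact hab (by simpa using h1)
  · have := hag 0 (Fin.succ_pos s)
    exact hab (by simpa using congrArg Prod.fst this)

lemma upPair_cons_of {d : ℕ} {a b : Sq} (h1 : a.1 = b.1) (h2 : a.2 ≠ b.2)
    (x y : Fin d → Sq) : UpPair (Fin.cons a x) (Fin.cons b y) :=
  ⟨0, fun s hs => absurd hs (by simp), by simpa using h1, by simpa using h2⟩

lemma upPair_or_widePair {d : ℕ} {σ τ : Fin d → Sq} (h : σ ≠ τ) :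
    UpPair σ τ ∨ WidePair σ τ := by
  classical
  have hne : ∃ i, σ i ≠ τ i := by
    by_contra hc; push_neg at hc; exact h (funext hc)
  let S : Finset (Fin d) := Finset.univ.filter fun i => σ i ≠ τ i
  have hS : S.Nonempty := hne.imp fun i hi => by simp [S, hi]
  have htS : S.min' hS ∈ S := S.min'_mem hS
  set t := S.min' hS with ht
  have htne : σ t ≠ τ t := by simpa [S] using htS
  have hag : ∀ s, s < t → σ s = τ s := by
    intro s hs
    by_contra hc
    exact absurd (S.min'_le s (by simp [S, hc])) (not_le.2 hs)
  by_cases h1 : (σ t).1 = (τ t).1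
  · exact Or.inl ⟨t, hag, h1, fun h2 => htne (Prod.ext h1 h2)⟩
  · exact Or.inr ⟨t, hag, h1⟩

lemma not_upPair_and_widePair {d : ℕ} {σ τ : Fin d → Sq} :
    ¬ (UpPair σ τ ∧ WidePair σ τ) := by
  rintro ⟨⟨t, hag, h1, h2⟩, ⟨t', hag', h1'⟩⟩
  rcases lt_trichotomy t t' with hlt | rfl | hlt
  · exact h2 (by rw [hag' t hlt])
  · exact h1' h1
  · exact h1' (by rw [hag t' hlt])

/-- Auxiliary relation for the disjoint union of two graphs. -/
def sumRel {V W : Type} (G : SimpleGraph V) (H : SimpleGraph W) : V ⊕ W → V ⊕ W → Prop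
  | .inl v, .inl v' => G.Adj v v'
  | .inr w, .inr w' => H.Adj w w'
  | _, _ => False

/-- Disjoint union (coproduct) of two simple graphs. -/
def sumGraph {V W : Type} (G : SimpleGraph V) (H : SimpleGraph W) : SimpleGraph (V ⊕ W) :=
  SimpleGraph.fromRel (sumRel G H)

/-- Auxiliary relation for the join of two graphs. -/
def joinRel {V W : Type} (G : SimpleGraph V) (H : SimpleGraph W) : V ⊕ W → V ⊕ W → Prop
  | .inl v, .inl v' => G.Adj v v'
  | .inr w, .inr w' => H.Adj w w'
  | _, _ => True

/-- Graph join of two simple graphs: disjoint union plus all cross edges. -/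
def joinGraph {V W : Type} (G : SimpleGraph V) (H : SimpleGraph W) : SimpleGraph (V ⊕ W) :=
  SimpleGraph.fromRel (joinRel G H)

/-- Cographs: the smallest class of graphs (up to isomorphism) containing the
one-vertex graph and closed under disjoint unions and graph joins. -/
inductive IsCograph : {V : Type} → SimpleGraph V → Prop
  | single : IsCograph (⊥ : SimpleGraph PUnit)
  | iso {V W : Type} {G : SimpleGraph V} {H : SimpleGraph W} (e : G ≃g H) :
      IsCograph G → IsCograph H
  | coprod {V W : Type} {G : SimpleGraph V} {H : SimpleGraph W} :
      IsCograph G → IsCograph H → IsCograph (sumGraph G H)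
  | join {V W : Type} {G : SimpleGraph V} {H : SimpleGraph W} :
      IsCograph G → IsCograph H → IsCograph (joinGraph G H)

def Good {V : Type} (G : SimpleGraph V) : Prop :=
  ∃ (d : ℕ) (f : V → Fin d → Sq), Function.Injective f ∧
    ∀ v₀ v₁ : V, v₀ ≠ v₁ → (G.Adj v₀ v₁ ↔ UpPair (f v₀) (f v₁))

lemma good_step {V W : Type} {G : SimpleGraph V} {H : SimpleGraph W}
    (hG : Good G) (hH : Good H) (K : SimpleGraph (V ⊕ W)) (a b : Sq) (cross : Prop)
    (hll : ∀ v v', v ≠ v' → (K.Adj (.inl v) (.inl v') ↔ G.Adj v v'))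
    (hrr : ∀ w w', w ≠ w' → (K.Adj (.inr w) (.inr w') ↔ H.Adj w w'))
    (hlr : ∀ v w, K.Adj (.inl v) (.inr w) ↔ cross)
    (hspec : (cross ∧ a.1 = b.1 ∧ a.2 ≠ b.2) ∨ (¬ cross ∧ a.1 ≠ b.1)) :
    Good K := by
  obtain ⟨dG, f, hfinj, hf⟩ := hG
  obtain ⟨dH, g, hginj, hg⟩ := hH
  have hab : a ≠ b := by
    rcases hspec with ⟨-, -, h2⟩ | ⟨-, h1⟩
    · exact fun he => h2 (congrArg Prod.snd he)
    · exact fun he => h1 (congrArg Prod.fst he)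
  refine ⟨max dG dH + 1,
    Sum.elim (fun v => Fin.cons a (pad (le_max_left dG dH) (f v)))
             (fun w => Fin.cons b (pad (le_max_right dG dH) (g w))), ?_, ?_⟩
  · rintro (v | w) (v' | w') hxy
    · have hxy' : Fin.cons (α := fun _ => Sq) a (pad (le_max_left dG dH) (f v)) =
          Fin.cons a (pad (le_max_left dG dH) (f v')) := hxy
      have h2' : pad (le_max_left dG dH) (f v) = pad (le_max_left dG dH) (f v') :=
        Fin.cons_right_injective (α := fun _ => Sq) a hxy'
      exact congrArg Sum.inl (hfinj (pad_injective _ h2'))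
    · exact absurd (by simpa using congrFun hxy 0) hab
    · exact absurd (by simpa using congrFun hxy 0) hab.symm
    · have hxy' : Fin.cons (α := fun _ => Sq) b (pad (le_max_right dG dH) (g w)) =
          Fin.cons b (pad (le_max_right dG dH) (g w')) := hxy
      have h2' : pad (le_max_right dG dH) (g w) = pad (le_max_right dG dH) (g w') :=
        Fin.cons_right_injective (α := fun _ => Sq) b hxy'
      exact congrArg Sum.inr (hginj (pad_injective _ h2'))
  · rintro (v | w) (v' | w') hne
    · have hne' : v ≠ v' := fun he => hne (congrArg Sum.inl he)
      rw [hll v v' hne', Sum.elim_inl, Sum.elim_inl, upPair_cons, upPair_pad]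
      exact hf v v' hne'
    · rw [hlr v w', Sum.elim_inl, Sum.elim_inr]
      rcases hspec with ⟨hc, h1, h2⟩ | ⟨hc, h1⟩
      · exact ⟨fun _ => upPair_cons_of h1 h2 _ _, fun _ => hc⟩
      · exact ⟨fun hk => absurd hk hc, fun hu => absurd hu (not_upPair_cons_of_fst_ne h1 _ _)⟩
    · rw [K.adj_comm, hlr v' w, Sum.elim_inl, Sum.elim_inr]
      rcases hspec with ⟨hc, h1, h2⟩ | ⟨hc, h1⟩
      · exact ⟨fun _ => upPair_cons_of h1.symm (Ne.symm h2) _ _, fun _ => hc⟩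
      · exact ⟨fun hk => absurd hk hc,
          fun hu => absurd hu (not_upPair_cons_of_fst_ne (Ne.symm h1) _ _)⟩
    · have hne' : w ≠ w' := fun he => hne (congrArg Sum.inr he)
      rw [hrr w w' hne', Sum.elim_inr, Sum.elim_inr, upPair_cons, upPair_pad]
      exact hg w w' hne'

lemma isCograph_good {V : Type} {G : SimpleGraph V} (h : IsCograph G) : Good G := by
  induction h with
  | single =>
      exact ⟨0, fun _ => Fin.elim0, fun x y _ => Subsingleton.elim x y,
        fun v₀ v₁ hne => absurd (Subsingleton.elim v₀ v₁) hne⟩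
  | iso e _ ih =>
      obtain ⟨d, f, hinj, hf⟩ := ih
      refine ⟨d, fun v => f (e.symm v), fun x y hxy => ?_, fun v₀ v₁ hne => ?_⟩
      · have := hinj hxy
        simpa using congrArg e this
      · have hne' : e.symm v₀ ≠ e.symm v₁ := fun he => hne (by simpa using congrArg e he)
        rw [← e.symm.map_adj_iff]
        exact hf _ _ hne'
  | coprod hG hH ihG ihH =>
      refine good_step ihG ihH _ ((0 : Fin 2), (0 : Fin 2)) ((1 : Fin 2), (0 : Fin 2)) False
        ?_ ?_ ?_ (Or.inr ⟨not_false, by decide⟩)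
      · intro v v' hne
        constructor
        · rintro ⟨-, h | h⟩
          · exact h
          · exact h.symm
        · intro hadj
          exact ⟨by simpa using hne, Or.inl hadj⟩
      · intro w w' hne
        constructor
        · rintro ⟨-, h | h⟩
          · exact h
          · exact h.symm
        · intro hadj
          exact ⟨by simpa using hne, Or.inl hadj⟩
      · intro v w
        simp [sumGraph, sumRel]
  | join hG hH ihG ihH =>
      refine good_step ihG ihH _ ((0 : Fin 2), (0 : Fin 2)) ((0 : Fin 2), (1 : Fin 2)) True
        ?_ ?_ ?_ (Or.inl ⟨trivial, rfl, by decide⟩)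
      · intro v v' hne
        constructor
        · rintro ⟨-, h | h⟩
          · exact h
          · exact h.symm
        · intro hadj
          exact ⟨by simpa using hne, Or.inl hadj⟩
      · intro w w' hne
        constructor
        · rintro ⟨-, h | h⟩
          · exact h
          · exact h.symm
        · intro hadj
          exact ⟨by simpa using hne, Or.inl hadj⟩
      · intro v w
        simp [joinGraph, joinRel]

/-- Every cograph embeds into some `(2²)^d` so that edges correspond exactly to
up-1-combs and non-edges correspond exactly to wide right-1-combs. -/
theorem stmt_8 {V : Type} (G : SimpleGraph V) (h : IsCograph G) :
    ∃ (d : ℕ) (f : V → Fin d → Sq), Function.Injective f ∧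
      ∀ v₀ v₁ : V, v₀ ≠ v₁ →
        ((G.Adj v₀ v₁ ↔ UpPair (f v₀) (f v₁)) ∧
         (¬ G.Adj v₀ v₁ ↔ WidePair (f v₀) (f v₁))) := by
  obtain ⟨d, f, hinj, hcond⟩ := isCograph_good h
  refine ⟨d, f, hinj, fun v₀ v₁ hne => ?_⟩
  have h1 := hcond v₀ v₁ hne
  have hfne : f v₀ ≠ f v₁ := fun he => hne (hinj he)
  refine ⟨h1, ?_, ?_⟩
  · intro hna
    rcases upPair_or_widePair hfne with hu | hw
    · exact absurd (h1.2 hu) hna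
    · exact hw
  · intro hw ha
    exact not_upPair_and_widePair ⟨h1.1 ha, hw⟩
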